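/- Let P ⊆ M = ℤⁿ be a finitely generated submonoid generating M as a group, σ∨ = ℚ≥0·P with dual cone σ, P_sat = M ∩ σ∨, and ρ an extremal ray of σ with primitive generator n_ρ. Suppose e ∈ M is a Demazure root for ρ such that (P + e) ∩ P_sat ⊆ P. Then the K-linear map δ_e on the monoid algebra K[P] defined on basis elements by δ_e(χ^m) = ⟨m, n_ρ⟩·χ^{m+e} is a well-defined locally nilpotent derivation of K[P]. -/

import Mathlib

open scoped Classical

/-- The standard pairing between the lattices `M = ℤⁿ` and `N = ℤⁿ`. -/
def pairZ {n : ℕ} (x y : Fin n → ℤ) : ℤ := ∑ i, x i * y i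

lemma pairZ_add {n : ℕ} (a b v : Fin n → ℤ) : pairZ (a + b) v = pairZ a v + pairZ b v := by
  simp [pairZ, add_mul, Finset.sum_add_distrib]

section Aux

variable (K : Type*) [Field K] {n k : ℕ}
variable (P : AddSubmonoid (Fin n → ℤ)) (nρ : Fin k → (Fin n → ℤ)) (i₀ : Fin k) (e : Fin n → ℤ)

/-- value of the derivation on a basis element -/
noncomputable def δaux (m : P) : AddMonoidAlgebra K P :=
  if h : (m : Fin n → ℤ) + e ∈ P then
    pairZ (m : Fin n → ℤ) (nρ i₀) • AddMonoidAlgebra.single (⟨(m : Fin n → ℤ) + e, h⟩ : P) 1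
  else 0

noncomputable def δlin : AddMonoidAlgebra K P →ₗ[K] AddMonoidAlgebra K P :=
  (Finsupp.lsum K fun m => LinearMap.toSpanSingleton K _ (δaux K P nρ i₀ e m)) ∘ₗ
    (AddMonoidAlgebra.coeffLinearEquiv K).toLinearMap

lemma δlin_single (m : P) (c : K) :
    δlin K P nρ i₀ e (AddMonoidAlgebra.single m c) = c • δaux K P nρ i₀ e m := by
  show (Finsupp.lsum K fun m => LinearMap.toSpanSingleton K _ (δaux K P nρ i₀ e m))
    (Finsupp.single m c) = _
  rw [Finsupp.lsum_single]; rfl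

end Aux

section Key

variable {K : Type*} [Field K] {n k : ℕ}
variable {P : AddSubmonoid (Fin n → ℤ)} {nρ : Fin k → (Fin n → ℤ)} {i₀ : Fin k} {e : Fin n → ℤ}
variable (hPsat : ∀ m ∈ P, ∀ j, 0 ≤ pairZ m (nρ j))
variable (he₁ : pairZ e (nρ i₀) = -1)
variable (he₂ : ∀ j, j ≠ i₀ → 0 ≤ pairZ e (nρ j))
variable (hPe : ∀ m ∈ P, (∀ j, 0 ≤ pairZ (m + e) (nρ j)) → m + e ∈ P)

include hPsat he₁ he₂ hPe

lemma mem_of_pos (a : P) (hpos : 0 < pairZ (a : Fin n → ℤ) (nρ i₀)) :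
    (a : Fin n → ℤ) + e ∈ P := by
  refine hPe _ a.2 fun j => ?_
  rw [pairZ_add]
  rcases eq_or_ne j i₀ with rfl | hj
  · rw [he₁]; omega
  · have := hPsat _ a.2 j
    have := he₂ j hj
    omega

lemma δaux_key (a b : P) :
    δaux K P nρ i₀ e (a + b) =
      AddMonoidAlgebra.single a (1 : K) * δaux K P nρ i₀ e b
        + AddMonoidAlgebra.single b (1 : K) * δaux K P nρ i₀ e a := by
  have ha := hPsat _ a.2 i₀
  have hb := hPsat _ b.2 i₀
  have hcoe : ((a + b : P) : Fin n → ℤ) = (a : Fin n → ℤ) + b := rfl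
  by_cases hz : pairZ (a : Fin n → ℤ) (nρ i₀) + pairZ (b : Fin n → ℤ) (nρ i₀) = 0
  · have ha0 : pairZ (a : Fin n → ℤ) (nρ i₀) = 0 := by omega
    have hb0 : pairZ (b : Fin n → ℤ) (nρ i₀) = 0 := by omega
    have hab0 : pairZ ((a + b : P) : Fin n → ℤ) (nρ i₀) = 0 := by
      rw [hcoe, pairZ_add]; omega
    have l1 : δaux K P nρ i₀ e (a + b) = 0 := by
      simp only [δaux]; split
      · rw [hab0, zero_smul]
      · rfl
    have l2 : δaux K P nρ i₀ e a = 0 := by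
      simp only [δaux]; split
      · rw [ha0, zero_smul]
      · rfl
    have l3 : δaux K P nρ i₀ e b = 0 := by
      simp only [δaux]; split
      · rw [hb0, zero_smul]
      · rfl
    simp [l1, l2, l3]
  · have hmem : ((a + b : P) : Fin n → ℤ) + e ∈ P :=
      mem_of_pos hPsat he₁ he₂ hPe (a + b) (by rw [hcoe, pairZ_add]; omega)
    set X : AddMonoidAlgebra K P := AddMonoidAlgebra.single (⟨((a + b : P) : Fin n → ℤ) + e, hmem⟩ : P) 1
      with hX
    have termA : AddMonoidAlgebra.single b (1 : K) * δaux K P nρ i₀ e a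
        = pairZ (a : Fin n → ℤ) (nρ i₀) • X := by
      by_cases h : (a : Fin n → ℤ) + e ∈ P
      · rw [δaux.eq_def, dif_pos h, mul_smul_comm]
        congr 1
        rw [AddMonoidAlgebra.single_mul_single, one_mul, hX]
        congr 1
        ext1
        show (b : Fin n → ℤ) + ((a : Fin n → ℤ) + e) = ((a : Fin n → ℤ) + b) + e
        abel
      · have ha0 : pairZ (a : Fin n → ℤ) (nρ i₀) = 0 := by
          by_contra h'
          exact h (mem_of_pos hPsat he₁ he₂ hPe a (by omega))
        rw [δaux.eq_def, dif_neg h, ha0, mul_zero, zero_smul]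
    have termB : AddMonoidAlgebra.single a (1 : K) * δaux K P nρ i₀ e b
        = pairZ (b : Fin n → ℤ) (nρ i₀) • X := by
      by_cases h : (b : Fin n → ℤ) + e ∈ P
      · rw [δaux.eq_def, dif_pos h, mul_smul_comm]
        congr 1
        rw [AddMonoidAlgebra.single_mul_single, one_mul, hX]
        congr 1
        ext1
        show (a : Fin n → ℤ) + ((b : Fin n → ℤ) + e) = ((a : Fin n → ℤ) + b) + e
        abel
      · have hb0 : pairZ (b : Fin n → ℤ) (nρ i₀) = 0 := by
          by_contra h'
          exact h (mem_of_pos hPsat he₁ he₂ hPe b (by omega))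
        rw [δaux.eq_def, dif_neg h, hb0, mul_zero, zero_smul]
    rw [termA, termB, δaux.eq_def, dif_pos hmem, ← hX]
    have hp : pairZ ((a + b : P) : Fin n → ℤ) (nρ i₀)
        = pairZ (b : Fin n → ℤ) (nρ i₀) + pairZ (a : Fin n → ℤ) (nρ i₀) := by
      rw [hcoe, pairZ_add]; ring
    rw [hp, add_smul]

end Key

section Key2

variable {K : Type*} [Field K] {n k : ℕ}
variable {P : AddSubmonoid (Fin n → ℤ)} {nρ : Fin k → (Fin n → ℤ)} {i₀ : Fin k} {e : Fin n → ℤ}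
variable (hPsat : ∀ m ∈ P, ∀ j, 0 ≤ pairZ m (nρ j))
variable (he₁ : pairZ e (nρ i₀) = -1)
variable (he₂ : ∀ j, j ≠ i₀ → 0 ≤ pairZ e (nρ j))
variable (hPe : ∀ m ∈ P, (∀ j, 0 ≤ pairZ (m + e) (nρ j)) → m + e ∈ P)

include hPsat he₁ he₂ hPe

lemma δlin_mul (x y : AddMonoidAlgebra K P) :
    δlin K P nρ i₀ e (x * y) = x * δlin K P nρ i₀ e y + y * δlin K P nρ i₀ e x := by
  induction x using AddMonoidAlgebra.induction_linear with
  | zero => simp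
  | add f g hf hg => rw [add_mul, map_add, map_add, hf, hg]; ring
  | single a c =>
    induction y using AddMonoidAlgebra.induction_linear with
    | zero => simp
    | add f g hf hg => rw [mul_add, map_add, map_add, hf, hg]; ring
    | single b d =>
      have hmul : AddMonoidAlgebra.single (R := K) a c * AddMonoidAlgebra.single b d
          = AddMonoidAlgebra.single (a + b) (c * d) := AddMonoidAlgebra.single_mul_single ..
      rw [hmul, δlin_single, δlin_single, δlin_single,
        δaux_key hPsat he₁ he₂ hPe a b]
      have e1 : (AddMonoidAlgebra.single a c : AddMonoidAlgebra K P)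
          = c • AddMonoidAlgebra.single a (1 : K) := by
        rw [AddMonoidAlgebra.smul_single', mul_one]
      have e2 : (AddMonoidAlgebra.single b d : AddMonoidAlgebra K P)
          = d • AddMonoidAlgebra.single b (1 : K) := by
        rw [AddMonoidAlgebra.smul_single', mul_one]
      rw [e1, e2, smul_mul_assoc, smul_mul_assoc, mul_smul_comm, mul_smul_comm,
        smul_smul, smul_smul, smul_add, mul_comm d c]

/-- the derivation -/
noncomputable def δder : Derivation K (AddMonoidAlgebra K P) (AddMonoidAlgebra K P) where
  toLinearMap := δlin K P nρ i₀ e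
  map_one_eq_zero' := by
    have h1 : (1 : AddMonoidAlgebra K P) = AddMonoidAlgebra.single 0 1 := rfl
    show δlin K P nρ i₀ e 1 = 0
    rw [h1, δlin_single, one_smul]
    have h0 : pairZ ((0 : P) : Fin n → ℤ) (nρ i₀) = 0 := by
      simp [pairZ]
    simp only [δaux]; split
    · rw [h0, zero_smul]
    · rfl
  leibniz' := fun x y => by
    show δlin K P nρ i₀ e (x * y) = _
    rw [δlin_mul hPsat he₁ he₂ hPe x y, smul_eq_mul, smul_eq_mul]

lemma δlin_pow_single (p : ℕ) : ∀ (m : P), pairZ (m : Fin n → ℤ) (nρ i₀) ≤ p →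
    ((δlin K P nρ i₀ e) ^ (p + 1)) (AddMonoidAlgebra.single m (1 : K)) = 0 := by
  induction p with
  | zero =>
    intro m hm
    have h0 : pairZ (m : Fin n → ℤ) (nρ i₀) = 0 :=
      le_antisymm (by exact_mod_cast hm) (hPsat _ m.2 i₀)
    rw [pow_one, δlin_single, one_smul]
    simp only [δaux]; split
    · rw [h0, zero_smul]
    · rfl
  | succ p ih =>
    intro m hm
    rw [pow_succ, Module.End.mul_apply, δlin_single, one_smul]
    by_cases h : (m : Fin n → ℤ) + e ∈ P
    · rw [δaux.eq_def, dif_pos h, map_zsmul]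
      have hle : pairZ ((⟨(m : Fin n → ℤ) + e, h⟩ : P) : Fin n → ℤ) (nρ i₀) ≤ p := by
        show pairZ ((m : Fin n → ℤ) + e) (nρ i₀) ≤ p
        rw [pairZ_add, he₁]
        have : pairZ (m : Fin n → ℤ) (nρ i₀) ≤ (p : ℤ) + 1 := by exact_mod_cast hm
        omega
      rw [ih _ hle, smul_zero]
    · rw [δaux.eq_def, dif_neg h, map_zero]

end Key2

theorem stmt8 {K : Type*} [Field K] [CharZero K] {n k : ℕ}
    (P : AddSubmonoid (Fin n → ℤ)) (hfg : P.FG)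
    (hgen : AddSubgroup.closure (P : Set (Fin n → ℤ)) = ⊤)
    (nρ : Fin k → (Fin n → ℤ))
    (hPsat : ∀ m ∈ P, ∀ j, 0 ≤ pairZ m (nρ j))
    (i₀ : Fin k) (e : Fin n → ℤ)
    (he₁ : pairZ e (nρ i₀) = -1)
    (he₂ : ∀ j, j ≠ i₀ → 0 ≤ pairZ e (nρ j))
    (hPe : ∀ m ∈ P, (∀ j, 0 ≤ pairZ (m + e) (nρ j)) → m + e ∈ P) :
    ∃ δ : Derivation K (AddMonoidAlgebra K P) (AddMonoidAlgebra K P),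
      (∀ (m : P) (h : (m : Fin n → ℤ) + e ∈ P),
        δ (AddMonoidAlgebra.single m 1) =
          pairZ (m : Fin n → ℤ) (nρ i₀) • (AddMonoidAlgebra.single (⟨(m : Fin n → ℤ) + e, h⟩ : P) 1 :
            AddMonoidAlgebra K P)) ∧
      (∀ m : P, (m : Fin n → ℤ) + e ∉ P → δ (AddMonoidAlgebra.single m 1) = 0) ∧
      (∀ x : AddMonoidAlgebra K P, ∃ N : ℕ,
        ((δ.toLinearMap : Module.End K (AddMonoidAlgebra K P)) ^ N) x = 0) := by
  refine ⟨δder hPsat he₁ he₂ hPe, ?_, ?_, ?_⟩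
  · intro m h
    show δlin K P nρ i₀ e (AddMonoidAlgebra.single m 1) = _
    rw [δlin_single, one_smul, δaux.eq_def, dif_pos h]
  · intro m h
    show δlin K P nρ i₀ e (AddMonoidAlgebra.single m 1) = 0
    rw [δlin_single, one_smul, δaux.eq_def, dif_neg h]
  · intro x
    have stable : ∀ (N N' : ℕ) (y : AddMonoidAlgebra K P), N ≤ N' →
        ((δlin K P nρ i₀ e) ^ N) y = 0 → ((δlin K P nρ i₀ e) ^ N') y = 0 := by
      intro N N' y hNN hy
      rw [← Nat.sub_add_cancel hNN, pow_add, Module.End.mul_apply, hy, map_zero]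
    show ∃ N : ℕ, ((δlin K P nρ i₀ e) ^ N) x = 0
    induction x using AddMonoidAlgebra.induction_linear with
    | zero => exact ⟨1, by rw [pow_one, map_zero]⟩
    | add f g hf hg =>
      obtain ⟨N1, h1⟩ := hf
      obtain ⟨N2, h2⟩ := hg
      exact ⟨max N1 N2, by
        rw [map_add, stable N1 _ f (le_max_left _ _) h1,
          stable N2 _ g (le_max_right _ _) h2, add_zero]⟩
    | single m c =>
      refine ⟨(pairZ (m : Fin n → ℤ) (nρ i₀)).toNat + 1, ?_⟩
      have hc : (AddMonoidAlgebra.single m c : AddMonoidAlgebra K P) = c • AddMonoidAlgebra.single m 1 := by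
        rw [AddMonoidAlgebra.smul_single', mul_one]
      rw [hc, map_smul,
        δlin_pow_single hPsat he₁ he₂ hPe _ _ (Int.self_le_toNat _), smul_zero]
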